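/- Under the hypotheses of the Krasnosel'skiĭ–Mann iteration on the range of V with T firmly quasinonexpansive in (ran V, ⟨·,·⟩_V), Id − T demiclosed at 0 in (ran V, ⟨·,·⟩_V), and λₙ ∈ [ε, 2−ε], the shadow sequence (P_{ran V} xₙ) converges weakly in (ran V, ⟨·,·⟩_V) to some x̂ ∈ Fix T, and S x̂ ∈ Fix S. -/

import Mathlib

open RealInnerProductSpace Filter Topology

section helpers
variable {H : Type*} [NormedAddCommGroup H] [InnerProductSpace ℝ H]

lemma qexpV (V : H →L[ℝ] H) (hsa : ∀ x y : H, ⟪V x, y⟫ = ⟪x, V y⟫) (u d : H) (t : ℝ) :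
    ⟪u + t•d, V (u + t•d)⟫ = ⟪u, V u⟫ + 2*t*⟪u, V d⟫ + t^2*⟪d, V d⟫ := by
  have hsym : ∀ a b : H, ⟪a, V b⟫ = ⟪b, V a⟫ := fun a b => by
    rw [← hsa, real_inner_comm]
  simp only [map_add, map_smul, inner_add_left, inner_add_right, inner_smul_left,
    inner_smul_right, conj_trivial]
  rw [hsym d u]; ring

lemma csV (V : H →L[ℝ] H) (hsa : ∀ x y : H, ⟪V x, y⟫ = ⟪x, V y⟫)
    (hmono : ∀ x : H, 0 ≤ ⟪V x, x⟫) (u v : H) :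
    ⟪u, V v⟫^2 ≤ ⟪u, V u⟫ * ⟪v, V v⟫ := by
  have hpos : ∀ a : H, 0 ≤ ⟪a, V a⟫ := fun a => by rw [real_inner_comm]; exact hmono a
  have hexp : ∀ t : ℝ, 0 ≤ ⟪u, V u⟫ + 2*t*⟪u, V v⟫ + t^2*⟪v, V v⟫ := fun t => by
    rw [← qexpV V hsa]; exact hpos _
  set a := ⟪u, V u⟫ with ha
  set b := ⟪u, V v⟫ with hbdef
  set c := ⟪v, V v⟫ with hcdef
  rcases eq_or_lt_of_le (hpos v) with hc | hc
  · -- c = 0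
    have hc0 : c = 0 := (hcdef ▸ hc).symm
    have hb : b = 0 := by
      by_contra hb
      have h1 := hexp (-(a+1)/(2*b))
      rw [hc0] at h1
      have e : 2*(-(a+1)/(2*b))*b = -(a+1) := by
        field_simp
      nlinarith [h1, e]
    rw [hb, hc0]; simp [ha ▸ hpos u]
  · have hc' : 0 < c := hcdef ▸ hc
    have := hexp (-b/c)
    have h2 : (-b/c)*c = -b := by field_simp
    nlinarith [sq_nonneg b]
end helpers

lemma extractV (g : ℕ → ℕ → ℝ) (R : ℕ → ℝ) (hg : ∀ k n, |g k n| ≤ R k) :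
    ∃ φ : ℕ → ℕ, StrictMono φ ∧ ∀ k, ∃ L, Tendsto (fun n => g k (φ n)) atTop (𝓝 L) := by
  have hcpt : IsCompact (Set.univ.pi (fun k : ℕ => Set.Icc (-(R k)) (R k))) :=
    isCompact_univ_pi (fun k => isCompact_Icc)
  have hmem : ∀ n, (fun k => g k n) ∈ Set.univ.pi (fun k : ℕ => Set.Icc (-(R k)) (R k)) := by
    intro n k _
    exact abs_le.mp (hg k n)
  obtain ⟨a, -, φ, hφ, hconv⟩ := hcpt.isSeqCompact (x := fun n => (fun k => g k n)) hmem
  refine ⟨φ, hφ, fun k => ⟨a k, ?_⟩⟩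
  exact (tendsto_pi_nhds.mp hconv) k

section weaklim
variable {H : Type*} [NormedAddCommGroup H] [InnerProductSpace ℝ H] [CompleteSpace H]

lemma weaklimV (y : ℕ → H) (B : ℝ) (hB : ∀ n, ‖y n‖ ≤ B) (c : ℕ → H)
    (hmem : ∀ n u, (∀ k, ⟪c k, u⟫ = 0) → ⟪y n, u⟫ = 0)
    (hconv : ∀ k, ∃ L, Tendsto (fun n => ⟪y n, c k⟫) atTop (𝓝 L)) :
    ∃ p : H, ∀ u : H, Tendsto (fun n => ⟪y n, u⟫) atTop (𝓝 ⟪p, u⟫) := by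
  have hB0 : 0 ≤ B := le_trans (norm_nonneg _) (hB 0)
  set K : Submodule ℝ H := (Submodule.span ℝ (Set.range c)).topologicalClosure with hK
  haveI : CompleteSpace K := (Submodule.span ℝ (Set.range c)).isClosed_topologicalClosure.completeSpace_coe
  -- Cauchy on span
  have hspan : ∀ d ∈ Submodule.span ℝ (Set.range c), ∃ L, Tendsto (fun n => ⟪y n, d⟫) atTop (𝓝 L) := by
    intro d hd
    induction hd using Submodule.span_induction with
    | mem w hw =>
      obtain ⟨k, rfl⟩ := hw
      exact hconv k
    | zero => exact ⟨0, by simpa using tendsto_const_nhds⟩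
    | add w1 w2 _ _ h1 h2 =>
      obtain ⟨L1, h1⟩ := h1; obtain ⟨L2, h2⟩ := h2
      exact ⟨L1 + L2, by simpa [inner_add_right] using h1.add h2⟩
    | smul t w _ h =>
      obtain ⟨L, h⟩ := h
      exact ⟨t * L, by simpa [inner_smul_right] using h.const_mul t⟩
  -- Cauchy for every u
  have hCauchy : ∀ u : H, CauchySeq (fun n => ⟪y n, u⟫) := by
    intro u
    obtain ⟨v, hv, w, hw, rfl⟩ := K.exists_add_mem_mem_orthogonal u
    have hyw : ∀ n, ⟪y n, w⟫ = 0 := by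
      intro n
      refine hmem n w (fun k => ?_)
      exact (Submodule.mem_orthogonal K w).mp hw (c k) (Submodule.le_topologicalClosure _ (Submodule.subset_span ⟨k, rfl⟩))
    have hv' : CauchySeq (fun n => ⟪y n, v⟫) := by
      rw [Metric.cauchySeq_iff]
      intro ε hε
      have hvc : v ∈ closure ((Submodule.span ℝ (Set.range c) : Submodule ℝ H) : Set H) := hv
      rw [Metric.mem_closure_iff] at hvc
      obtain ⟨d, hd, hdist⟩ := hvc (ε / (3 * (B + 1))) (by positivity)
      obtain ⟨L, hL⟩ := hspan d hd
      have hdc := hL.cauchySeq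
      rw [Metric.cauchySeq_iff] at hdc
      obtain ⟨N, hN⟩ := hdc (ε / 3) (by positivity)
      refine ⟨N, fun m hm n hn => ?_⟩
      have est : ∀ j, |⟪y j, v⟫ - ⟪y j, d⟫| ≤ B * (ε / (3 * (B + 1))) := by
        intro j
        rw [← inner_sub_right]
        calc |⟪y j, v - d⟫| ≤ ‖y j‖ * ‖v - d‖ := abs_real_inner_le_norm _ _
          _ ≤ B * (ε / (3 * (B + 1))) := by
              apply mul_le_mul (hB j) _ (norm_nonneg _) hB0
              rw [← dist_eq_norm]
              exact le_of_lt hdist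
      have hBe : B * (ε / (3 * (B + 1))) ≤ ε / 3 := by
        rw [mul_div_assoc', div_le_div_iff₀ (by positivity) (by norm_num : (0:ℝ) < 3)]
        nlinarith [hB0, hε.le]
      have h1 := est m; have h2 := est n
      have h3 := hN m hm n hn
      rw [Real.dist_eq] at h3 ⊢
      have : ⟪y m, v⟫ - ⟪y n, v⟫ =
          (⟪y m, v⟫ - ⟪y m, d⟫) + (⟪y m, d⟫ - ⟪y n, d⟫) + (⟪y n, d⟫ - ⟪y n, v⟫) := by ring
      rw [this]
      calc |(⟪y m, v⟫ - ⟪y m, d⟫) + (⟪y m, d⟫ - ⟪y n, d⟫) + (⟪y n, d⟫ - ⟪y n, v⟫)|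
          ≤ |(⟪y m, v⟫ - ⟪y m, d⟫) + (⟪y m, d⟫ - ⟪y n, d⟫)| + |⟪y n, d⟫ - ⟪y n, v⟫| := abs_add_le _ _
        _ ≤ |⟪y m, v⟫ - ⟪y m, d⟫| + |⟪y m, d⟫ - ⟪y n, d⟫| + |⟪y n, d⟫ - ⟪y n, v⟫| := by
            have := abs_add_le (⟪y m, v⟫ - ⟪y m, d⟫) (⟪y m, d⟫ - ⟪y n, d⟫); linarith
        _ < ε := by
            have h2' : |⟪y n, d⟫ - ⟪y n, v⟫| ≤ B * (ε / (3 * (B + 1))) := by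
              rw [abs_sub_comm]; exact h2
            linarith
    have : (fun n => ⟪y n, v + w⟫) = fun n => ⟪y n, v⟫ := by
      funext n; rw [inner_add_right, hyw n, add_zero]
    rw [this]
    exact hv'
  -- limits exist
  have hlim : ∀ u : H, ∃ L : ℝ, Tendsto (fun n => ⟪y n, u⟫) atTop (𝓝 L) :=
    fun u => cauchySeq_tendsto_of_complete (hCauchy u)
  choose L hL using hlim
  -- linearity and boundedness of L
  have hadd : ∀ u v : H, L (u + v) = L u + L v := by
    intro u v
    refine tendsto_nhds_unique (hL (u + v)) ?_
    simpa [inner_add_right] using (hL u).add (hL v)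
  have hsmul : ∀ (t : ℝ) (u : H), L (t • u) = t * L u := by
    intro t u
    refine tendsto_nhds_unique (hL (t • u)) ?_
    simpa [inner_smul_right] using (hL u).const_mul t
  have hbd : ∀ u : H, ‖L u‖ ≤ B * ‖u‖ := by
    intro u
    have : Tendsto (fun n => |⟪y n, u⟫|) atTop (𝓝 |L u|) := (hL u).abs
    refine le_of_tendsto this (Eventually.of_forall (fun n => ?_))
    calc |⟪y n, u⟫| ≤ ‖y n‖ * ‖u‖ := abs_real_inner_le_norm _ _
      _ ≤ B * ‖u‖ := mul_le_mul_of_nonneg_right (hB n) (norm_nonneg _)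
  let f : H →ₗ[ℝ] ℝ := { toFun := L, map_add' := hadd, map_smul' := hsmul }
  let F : H →L[ℝ] ℝ := LinearMap.mkContinuous f B hbd
  refine ⟨(InnerProductSpace.toDual ℝ H).symm F, fun u => ?_⟩
  have : ⟪(InnerProductSpace.toDual ℝ H).symm F, u⟫ = F u := InnerProductSpace.toDual_symm_apply
  rw [this]
  exact hL u
end weaklim

set_option maxHeartbeats 2000000 in
/-- Weak convergence in `(ran V, ⟪·,·⟫_V)` of the shadow sequence of the
Krasnosel'skiĭ–Mann iteration, when `T = (P ∘ S)|_{ran V}` is firmly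
quasinonexpansive, `Id − T` is demiclosed at `0`, and `λₙ ∈ [ε, 2−ε]`:
the shadows `P xₙ` converge weakly to some `x̂ ∈ Fix T`, and `S x̂ ∈ Fix S`. -/
theorem stmt_5 {H : Type*} [NormedAddCommGroup H] [InnerProductSpace ℝ H] [CompleteSpace H]
    (V : H →L[ℝ] H)
    (hsa : ∀ x y : H, ⟪V x, y⟫ = ⟪x, V y⟫)
    (hmono : ∀ x : H, 0 ≤ ⟪V x, x⟫)
    (hclosed : IsClosed (Set.range V))
    (P : H →L[ℝ] H)
    (hPmem : ∀ x, P x ∈ Set.range V)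
    (hPfix : ∀ x ∈ Set.range V, P x = x)
    (hPorth : ∀ x : H, ∀ w ∈ Set.range V, ⟪x - P x, w⟫ = 0)
    (S : H → H) (hfixS : ∃ x, S x = x) (hSP : ∀ x, S (P x) = S x)
    (FixT : Set H)
    (hFixT : FixT = {z | z ∈ Set.range V ∧ P (S z) = z})
    (hfqne : ∀ z ∈ Set.range V, ∀ y ∈ FixT,
      ⟪P (S z) - y, V (P (S z) - y)⟫
        ≤ ⟪z - y, V (z - y)⟫ - ⟪P (S z) - z, V (P (S z) - z)⟫)
    (hdemi : ∀ (z : ℕ → H) (zl : H), (∀ n, z n ∈ Set.range V) → zl ∈ Set.range V →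
      (∀ w ∈ Set.range V, Tendsto (fun n => ⟪z n - zl, V w⟫) atTop (𝓝 0)) →
      Tendsto (fun n => ⟪z n - P (S (z n)), V (z n - P (S (z n)))⟫) atTop (𝓝 0) →
      P (S zl) = zl)
    (ε : ℝ) (hε : 0 < ε) (hε1 : ε < 1)
    (lam : ℕ → ℝ) (hlam : ∀ n, lam n ∈ Set.Icc ε (2 - ε))
    (x : ℕ → H)
    (hrec : ∀ n, x (n + 1) = (1 - lam n) • x n + lam n • S (x n)) :
    ∃ xh ∈ FixT,
      (∀ w ∈ Set.range V, Tendsto (fun n => ⟪P (x n) - xh, V w⟫) atTop (𝓝 0)) ∧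
      S (S xh) = S xh := by
  classical
  have hsym : ∀ a b : H, ⟪a, V b⟫ = ⟪b, V a⟫ := fun a b => by
    rw [← hsa, real_inner_comm]
  have hpos : ∀ a : H, 0 ≤ ⟪a, V a⟫ := fun a => by rw [real_inner_comm]; exact hmono a
  -- `V (P y) = V y`
  have hVP : ∀ yy : H, V (P yy) = V yy := by
    intro yy
    have h0 : ⟪V (yy - P yy), V (yy - P yy)⟫ = 0 := by
      rw [hsa]
      exact hPorth yy _ ⟨V (yy - P yy), rfl⟩
    have h1 : V (yy - P yy) = 0 := inner_self_eq_zero.mp h0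
    rw [map_sub, sub_eq_zero] at h1
    exact h1.symm
  -- range is closed under subtraction
  have hsub : ∀ u ∈ Set.range V, ∀ v ∈ Set.range V, u - v ∈ Set.range V := by
    rintro u ⟨a1, rfl⟩ v ⟨a2, rfl⟩
    exact ⟨a1 - a2, map_sub V a1 a2⟩
  -- trivial kernel on the range
  have hker : ∀ u ∈ Set.range V, V u = 0 → u = 0 := by
    rintro u ⟨e0, rfl⟩ h0
    have : ⟪V e0, V e0⟫ = 0 := by rw [hsa, h0, inner_zero_right]
    exact inner_self_eq_zero.mp this
  -- coercivity on the range : ∃ C > 0, ‖u‖² ≤ C⟪u,Vu⟫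
  obtain ⟨C, hCpos, hcoer⟩ : ∃ C : ℝ, 0 < C ∧ ∀ u ∈ Set.range V, ‖u‖^2 ≤ C * ⟪u, V u⟫ := by
    set RV : Submodule ℝ H := LinearMap.range (V : H →ₗ[ℝ] H) with hRV
    have hRVcoe : (RV : Set H) = Set.range V := LinearMap.coe_range _
    haveI : CompleteSpace RV := (show IsClosed (RV : Set H) from hRVcoe ▸ hclosed).completeSpace_coe
    have hmc : ∀ v : H, v ∈ Set.range V → v ∈ RV := fun v hv => by
      rw [← SetLike.mem_coe, hRVcoe]; exact hv
    have hmc' : ∀ v : H, v ∈ RV → v ∈ Set.range V := fun v hv => by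
      rwa [← SetLike.mem_coe, hRVcoe] at hv
    have hmemRV : ∀ u : RV, V (u : H) ∈ RV := fun u => LinearMap.mem_range.mpr ⟨u, rfl⟩
    set f : RV →L[ℝ] RV := (V.comp RV.subtypeL).codRestrict RV hmemRV with hf
    have hfapp : ∀ u : RV, (f u : H) = V (u : H) := fun u => rfl
    have hkerf : LinearMap.ker (f : RV →ₗ[ℝ] RV) = ⊥ := by
      rw [LinearMap.ker_eq_bot']
      intro u hu
      have h0 : V (u : H) = 0 := by
        have := congrArg (Subtype.val) hu
        exact this
      have : (u : H) = 0 := hker _ (hmc' _ u.2) h0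
      exact Subtype.ext this
    have hrangef : LinearMap.range (f : RV →ₗ[ℝ] RV) = ⊤ := by
      rw [LinearMap.range_eq_top]
      rintro ⟨w, hw⟩
      obtain ⟨yy, rfl⟩ : w ∈ Set.range V := hmc' _ hw
      refine ⟨⟨P yy, hmc _ (hPmem yy)⟩, ?_⟩
      exact Subtype.ext (by exact hVP yy)
    let e := ContinuousLinearEquiv.ofBijective f hkerf hrangef
    set K1 : ℝ := ‖(e.symm : RV →L[ℝ] RV)‖ with hK1
    have hK1nn : 0 ≤ K1 := norm_nonneg _
    have hlow : ∀ u ∈ Set.range V, ‖u‖ ≤ K1 * ‖V u‖ := by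
      intro u hu
      have hu' : u ∈ RV := hmc _ hu
      have h1 : e.symm (e ⟨u, hu'⟩) = ⟨u, hu'⟩ := e.symm_apply_apply _
      have h2 : ‖(⟨u, hu'⟩ : RV)‖ = ‖u‖ := rfl
      have h3 : e ⟨u, hu'⟩ = f ⟨u, hu'⟩ := rfl
      calc ‖u‖ = ‖(e.symm (e ⟨u, hu'⟩) : H)‖ := by rw [h1]
        _ = ‖e.symm (e ⟨u, hu'⟩)‖ := rfl
        _ ≤ K1 * ‖e ⟨u, hu'⟩‖ := (e.symm : RV →L[ℝ] RV).le_opNorm _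
        _ = K1 * ‖V u‖ := by rw [h3]; congr 1
    have hVnorm : ∀ u : H, ‖V u‖^2 ≤ (‖V‖ + 1) * ⟪u, V u⟫ := by
      intro u
      have hcs := csV V hsa hmono (V u) u
      rw [real_inner_self_eq_norm_sq] at hcs
      have h4 : ⟪V u, V (V u)⟫ ≤ ‖V u‖ * (‖V‖ * ‖V u‖) := by
        calc ⟪V u, V (V u)⟫ ≤ ‖V u‖ * ‖V (V u)‖ := real_inner_le_norm _ _
          _ ≤ ‖V u‖ * (‖V‖ * ‖V u‖) :=
            mul_le_mul_of_nonneg_left (V.le_opNorm _) (norm_nonneg _)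
      rcases eq_or_lt_of_le (norm_nonneg (V u)) with h0 | h0
      · rw [← h0]
        simpa using mul_nonneg (by positivity : (0:ℝ) ≤ ‖V‖ + 1) (hpos u)
      · have hs : 0 < ‖V u‖^2 := by positivity
        have h5 : (‖V u‖^2) * (‖V u‖^2) ≤ (‖V‖ * ⟪u, V u⟫) * (‖V u‖^2) := by
          nlinarith [hpos u]
        have h6 : ‖V u‖^2 ≤ ‖V‖ * ⟪u, V u⟫ := le_of_mul_le_mul_right h5 hs
        nlinarith [hpos u]
    refine ⟨K1^2 * (‖V‖ + 1) + 1, by positivity, fun u hu => ?_⟩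
    have h5 := hlow u hu
    have h6 := hVnorm u
    nlinarith [hpos u, norm_nonneg u, norm_nonneg (V u), sq_nonneg K1]
  -- the shadow sequence
  obtain ⟨z, hzdef⟩ : ∃ z : ℕ → H, z = fun n => P (x n) := ⟨_, rfl⟩
  have hz : ∀ n, z n ∈ Set.range V := fun n => by rw [hzdef]; exact hPmem _
  have hzrec : ∀ n, z (n+1) = (1 - lam n) • z n + lam n • P (S (z n)) := by
    intro n
    simp only [hzdef]
    rw [hrec n, map_add, map_smul, map_smul, ← hSP (x n)]
  obtain ⟨r, hrdef⟩ : ∃ r : ℕ → ℝ,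
      r = fun n => ⟪z n - P (S (z n)), V (z n - P (S (z n)))⟫ := ⟨_, rfl⟩
  have hrnn : ∀ n, 0 ≤ r n := fun n => by rw [hrdef]; exact hpos _
  -- Fejér inequality
  have hfej : ∀ y ∈ FixT, ∀ n,
      ⟪z (n+1) - y, V (z (n+1) - y)⟫ ≤ ⟪z n - y, V (z n - y)⟫ - ε^2 * r n := by
    intro y hy n
    have e1 : z (n+1) - y = (z n - y) + (-(lam n)) • (z n - P (S (z n))) := by
      rw [hzrec n]; module
    have e2 : P (S (z n)) - y = (z n - y) + (-1 : ℝ) • (z n - P (S (z n))) := by module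
    have hq := hfqne (z n) (hz n) y hy
    have e3 : P (S (z n)) - z n = (0 : H) + (-1 : ℝ) • (z n - P (S (z n))) := by module
    rw [e2, e3, qexpV V hsa, qexpV V hsa] at hq
    simp only [inner_zero_left, ContinuousLinearMap.map_zero, inner_zero_right] at hq
    rw [e1, qexpV V hsa, hrdef]
    set b := ⟪z n - y, V (z n - P (S (z n)))⟫ with hb
    have hrn := hrnn n
    rw [hrdef] at hrn
    obtain ⟨hl1, hl2⟩ := hlam n
    have hfacts : 0 ≤ (lam n - ε) * (2 - ε - lam n) :=
      mul_nonneg (by linarith) (by linarith)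
    nlinarith [mul_nonneg hrn hfacts, mul_nonneg (mul_nonneg hrn (le_of_lt hε)) (by linarith : (0:ℝ) ≤ 1 - ε), mul_nonneg (by linarith : (0:ℝ) ≤ lam n) (by nlinarith : (0:ℝ) ≤ b - ⟪z n - P (S (z n)), V (z n - P (S (z n)))⟫)]
  -- limits of the Fejér quantities
  have haL : ∀ y ∈ FixT, Antitone (fun n => ⟪z n - y, V (z n - y)⟫) ∧
      ∃ L, Tendsto (fun n => ⟪z n - y, V (z n - y)⟫) atTop (𝓝 L) := by
    intro y hy
    have hant : Antitone (fun n => ⟪z n - y, V (z n - y)⟫) := by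
      apply antitone_nat_of_succ_le
      intro n
      have := hfej y hy n
      nlinarith [hrnn n, sq_nonneg ε]
    refine ⟨hant, ?_⟩
    refine ⟨_, tendsto_atTop_ciInf hant ⟨0, ?_⟩⟩
    rintro t ⟨n, rfl⟩
    exact hpos _
  -- the fixed point `P x₀`
  obtain ⟨x₀, hx₀⟩ := hfixS
  have hy₀ : P x₀ ∈ FixT := by
    rw [hFixT]
    refine ⟨hPmem x₀, ?_⟩
    rw [hSP x₀, hx₀]
  -- residuals tend to zero
  have hrtend : Tendsto r atTop (𝓝 0) := by
    obtain ⟨hant, L, hL⟩ := haL _ hy₀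
    have hsucc : Tendsto (fun n => ⟪z (n+1) - P x₀, V (z (n+1) - P x₀)⟫) atTop (𝓝 L) :=
      hL.comp (tendsto_add_atTop_nat 1)
    have hdiff : Tendsto (fun n => (⟪z n - P x₀, V (z n - P x₀)⟫
        - ⟪z (n+1) - P x₀, V (z (n+1) - P x₀)⟫) / ε^2) atTop (𝓝 0) := by
      have := (hL.sub hsucc).div_const (ε^2)
      simpa using this
    refine squeeze_zero hrnn (fun n => ?_) hdiff
    have := hfej _ hy₀ n
    rw [le_div_iff₀ (by positivity)]
    nlinarith
  -- uniform bound on the shadow sequence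
  obtain ⟨B, hBnn, hB⟩ : ∃ B : ℝ, 0 ≤ B ∧ ∀ n, ‖z n‖ ≤ B := by
    obtain ⟨hant, -⟩ := haL _ hy₀
    refine ⟨‖P x₀‖ + Real.sqrt (C * ⟪z 0 - P x₀, V (z 0 - P x₀)⟫), by positivity, fun n => ?_⟩
    have h1 : ‖z n - P x₀‖^2 ≤ C * ⟪z n - P x₀, V (z n - P x₀)⟫ :=
      hcoer _ (hsub _ (hz n) _ (hPmem x₀))
    have h2 : C * ⟪z n - P x₀, V (z n - P x₀)⟫ ≤ C * ⟪z 0 - P x₀, V (z 0 - P x₀)⟫ :=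
      mul_le_mul_of_nonneg_left (hant (Nat.zero_le n)) (le_of_lt hCpos)
    have h3 : ‖z n - P x₀‖ ≤ Real.sqrt (C * ⟪z 0 - P x₀, V (z 0 - P x₀)⟫) := by
      rw [show ‖z n - P x₀‖ = Real.sqrt (‖z n - P x₀‖^2) from (Real.sqrt_sq (norm_nonneg _)).symm]
      exact Real.sqrt_le_sqrt (by linarith)
    calc ‖z n‖ = ‖(z n - P x₀) + P x₀‖ := by congr 1; abel
      _ ≤ ‖z n - P x₀‖ + ‖P x₀‖ := norm_add_le _ _
      _ ≤ ‖P x₀‖ + Real.sqrt (C * ⟪z 0 - P x₀, V (z 0 - P x₀)⟫) := by linarith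
  -- weak subsequential extraction
  have key : ∀ ns : ℕ → ℕ, Tendsto ns atTop atTop →
      ∃ q ∈ FixT, ∃ ms : ℕ → ℕ, Tendsto ms atTop atTop ∧
        ∀ u : H, Tendsto (fun n => ⟪z (ns (ms n)), u⟫) atTop (𝓝 ⟪q, u⟫) := by
    intro ns hns
    obtain ⟨c, hcdef⟩ : ∃ c : ℕ → H,
        c = fun k => if Even k then z (k/2) else V (z (k/2)) := ⟨_, rfl⟩
    have hc2 : ∀ m, c (2*m) = z m := by
      intro m
      rw [hcdef]
      simp only
      rw [if_pos (even_two_mul m)]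
      congr 1
      omega
    obtain ⟨φ, hφ, hconv⟩ := extractV (fun k n => ⟪z (ns n), c k⟫) (fun k => B * ‖c k‖)
      (fun k n => by
        calc |⟪z (ns n), c k⟫| ≤ ‖z (ns n)‖ * ‖c k‖ := abs_real_inner_le_norm _ _
          _ ≤ B * ‖c k‖ := mul_le_mul_of_nonneg_right (hB _) (norm_nonneg _))
    obtain ⟨p, hp⟩ := weaklimV (fun n => z (ns (φ n))) B (fun n => hB _) c
      (fun n u hu => by
        have := hu (2 * (ns (φ n)))
        rwa [hc2] at this)
      hconv
    have hpr : p ∈ Set.range V := by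
      have h1 : ∀ n, ⟪z (ns (φ n)), p - P p⟫ = 0 := fun n => by
        rw [real_inner_comm]
        exact hPorth p _ (hz _)
      have h2 : ⟪p, p - P p⟫ = 0 := by
        refine tendsto_nhds_unique (hp (p - P p)) ?_
        simp only [h1]
        exact tendsto_const_nhds
      have h3 : ⟪P p, p - P p⟫ = 0 := by
        rw [real_inner_comm]
        exact hPorth p (P p) (hPmem p)
      have h4 : ⟪p - P p, p - P p⟫ = 0 := by rw [inner_sub_left, h2, h3]; ring
      have h5 : p = P p := by
        have := inner_self_eq_zero.mp h4
        rwa [sub_eq_zero] at this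
      rw [h5]; exact hPmem p
    have hdm : P (S p) = p := by
      refine hdemi (fun n => z (ns (φ n))) p (fun n => hz _) hpr ?_ ?_
      · intro w hw
        have := (hp (V w)).sub (tendsto_const_nhds (x := ⟪p, V w⟫))
        simpa [inner_sub_left, sub_self] using this
      · have : (fun n => ⟪z (ns (φ n)) - P (S (z (ns (φ n)))),
            V (z (ns (φ n)) - P (S (z (ns (φ n)))))⟫) = fun n => r (ns (φ n)) := by
          funext n; rw [hrdef]
        rw [this]
        exact hrtend.comp (hns.comp hφ.tendsto_atTop)
    refine ⟨p, ?_, φ, hφ.tendsto_atTop, hp⟩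
    rw [hFixT]
    exact ⟨hpr, hdm⟩
  -- uniqueness of weak subsequential limits in FixT
  have huniq : ∀ p ∈ FixT, ∀ q ∈ FixT, ∀ ns1 ns2 : ℕ → ℕ,
      Tendsto ns1 atTop atTop → Tendsto ns2 atTop atTop →
      (∀ u, Tendsto (fun n => ⟪z (ns1 n), u⟫) atTop (𝓝 ⟪p, u⟫)) →
      (∀ u, Tendsto (fun n => ⟪z (ns2 n), u⟫) atTop (𝓝 ⟪q, u⟫)) → p = q := by
    intro p hp q hq ns1 ns2 ht1 ht2 h1 h2
    obtain ⟨-, Lp, hLp⟩ := haL p hp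
    obtain ⟨-, Lq, hLq⟩ := haL q hq
    have hexp : ∀ n, ⟪z n - q, V (q - p)⟫ =
        (⟪z n - p, V (z n - p)⟫ - ⟪z n - q, V (z n - q)⟫ - ⟪q - p, V (q - p)⟫) / 2 := by
      intro n
      have e : z n - p = (z n - q) + (1:ℝ) • (q - p) := by module
      rw [e, qexpV V hsa]
      ring
    have hs : Tendsto (fun n => ⟪z n - q, V (q - p)⟫) atTop
        (𝓝 ((Lp - Lq - ⟪q - p, V (q - p)⟫) / 2)) := by
      simp only [hexp]
      exact ((hLp.sub hLq).sub tendsto_const_nhds).div_const 2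
    have hlim1 : Tendsto (fun n => ⟪z (ns1 n) - q, V (q - p)⟫) atTop
        (𝓝 (⟪p, V (q - p)⟫ - ⟪q, V (q - p)⟫)) := by
      have := (h1 (V (q - p))).sub (tendsto_const_nhds (x := ⟪q, V (q - p)⟫))
      simpa [inner_sub_left] using this
    have hlim2 : Tendsto (fun n => ⟪z (ns2 n) - q, V (q - p)⟫) atTop
        (𝓝 (⟪q, V (q - p)⟫ - ⟪q, V (q - p)⟫)) := by
      have := (h2 (V (q - p))).sub (tendsto_const_nhds (x := ⟪q, V (q - p)⟫))
      simpa [inner_sub_left] using this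
    have E1 : (Lp - Lq - ⟪q - p, V (q - p)⟫) / 2 = ⟪p, V (q - p)⟫ - ⟪q, V (q - p)⟫ :=
      tendsto_nhds_unique (hs.comp ht1) hlim1
    have E2 : (Lp - Lq - ⟪q - p, V (q - p)⟫) / 2 = ⟪q, V (q - p)⟫ - ⟪q, V (q - p)⟫ :=
      tendsto_nhds_unique (hs.comp ht2) hlim2
    have hQd : ⟪q - p, V (q - p)⟫ = 0 := by
      have h3 : ⟪q - p, V (q - p)⟫ = ⟪q, V (q - p)⟫ - ⟪p, V (q - p)⟫ := by
        rw [inner_sub_left]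
      linarith [E1, E2, h3.ge, h3.le]
    have hVd : V (q - p) = 0 := by
      have hcs := csV V hsa hmono (V (q - p)) (q - p)
      rw [hQd, mul_zero] at hcs
      have : ⟪V (q - p), V (q - p)⟫ = 0 := by nlinarith [real_inner_self_nonneg (x := V (q - p))]
      exact inner_self_eq_zero.mp this
    have hdmem : q - p ∈ Set.range V := by
      rw [hFixT] at hp hq
      exact hsub _ hq.1 _ hp.1
    have : q - p = 0 := hker _ hdmem hVd
    have : q = p := by rwa [sub_eq_zero] at this
    exact this.symm
  -- assemble
  obtain ⟨xh, hxh, ms0, hms0, hw0⟩ := key id tendsto_id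
  refine ⟨xh, hxh, ?_, ?_⟩
  · intro w hw
    have hzgoal : ∀ ns : ℕ → ℕ, (fun n : ℕ => ⟪P (x (ns n)) - xh, V w⟫)
        = fun n => ⟪z (ns n) - xh, V w⟫ := by
      intro ns; funext n; rw [hzdef]
    apply tendsto_of_subseq_tendsto
    intro ns hns
    obtain ⟨q, hqF, ms, hms, hwq⟩ := key ns hns
    have hqx : q = xh := huniq q hqF xh hxh (fun n => ns (ms n)) ms0
      (hns.comp hms) hms0 hwq hw0
    refine ⟨ms, ?_⟩
    have h := (hwq (V w)).sub (tendsto_const_nhds (x := ⟪xh, V w⟫))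
    rw [hqx, sub_self] at h
    have heq : (fun n : ℕ => ⟪P (x (ns (ms n))) - xh, V w⟫)
        = fun n => ⟪z (ns (ms n)), V w⟫ - ⟪xh, V w⟫ := by
      funext n; rw [hzdef]; simp [inner_sub_left]
    rw [heq]
    exact h
  · have hfix : P (S xh) = xh := (hFixT ▸ hxh).2
    calc S (S xh) = S (P (S xh)) := (hSP (S xh)).symm
      _ = S xh := by rw [hfix]
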